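/- Let σ₁, σ₂ be finite Borel measures of equal total mass on a compact convex set Ω ⊆ ℝⁿ such that ∫ v dσ₁ ≤ ∫ v dσ₂ for every continuous convex v : Ω → ℝ (σ₁ precedes σ₂ in convex order). If T is a Markov kernel on Ω with σ₂ = Tσ₁ and barycenter property ∫ ξ dT_x(ξ) = x for σ₁-a.e. x, and u : Ω → ℝ is a continuous convex function with ∫ u dσ₂ = ∫ u dσ₁, then for σ₁-almost every x the measure T_x is supported on the contact set x̃ = {ξ ∈ Ω : u(ξ) = u(x) + ⟨p, ξ − x⟩} for any subgradient p ∈ ∂u(x). -/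

import Mathlib

open scoped RealInnerProductSpace
open MeasureTheory

/-- Localization to leaves for sweeping operators: if `σ₁ ⪯ σ₂` in convex order on a
compact convex `Ω ⊆ ℝⁿ`, `T` is a Markov kernel with barycenter property and
`σ₂ = Tσ₁`, and `u` is a continuous convex function with `∫ u dσ₂ = ∫ u dσ₁`, then
for `σ₁`-a.e. `x` the measure `T_x` is supported on the contact set
`x̃ = {ξ ∈ Ω : u ξ = u x + ⟪p x, ξ − x⟫}` of any subgradient selection `p`. -/
theorem stmt8 {n : ℕ} (Ω : Set (EuclideanSpace ℝ (Fin n)))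
    (hΩc : IsCompact Ω) (hΩconv : Convex ℝ Ω)
    (σ₁ σ₂ : Measure (EuclideanSpace ℝ (Fin n)))
    [IsFiniteMeasure σ₁] [IsFiniteMeasure σ₂]
    (hs1 : σ₁ Ωᶜ = 0) (hs2 : σ₂ Ωᶜ = 0)
    (hmass : σ₁ Set.univ = σ₂ Set.univ)
    (horder : ∀ v : EuclideanSpace ℝ (Fin n) → ℝ, Continuous v → ConvexOn ℝ Ω v →
      (∫ x, v x ∂σ₁) ≤ ∫ x, v x ∂σ₂)
    (T : EuclideanSpace ℝ (Fin n) → Measure (EuclideanSpace ℝ (Fin n)))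
    (hTprob : ∀ x, IsProbabilityMeasure (T x))
    (hTmeas : ∀ s : Set (EuclideanSpace ℝ (Fin n)), MeasurableSet s →
      Measurable fun x => T x s)
    (hTsupp : ∀ x ∈ Ω, (T x) Ωᶜ = 0)
    (hbind : σ₂ = σ₁.bind T)
    (hbary : ∀ᵐ x ∂σ₁, (∫ ξ, ξ ∂(T x)) = x)
    (u : EuclideanSpace ℝ (Fin n) → ℝ) (hu : Continuous u) (huconv : ConvexOn ℝ Ω u)
    (heq : (∫ x, u x ∂σ₂) = ∫ x, u x ∂σ₁)
    (p : EuclideanSpace ℝ (Fin n) → EuclideanSpace ℝ (Fin n))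
    (hp : ∀ x ∈ Ω, ∀ ξ ∈ Ω, u x + ⟪p x, ξ - x⟫ ≤ u ξ) :
    ∀ᵐ x ∂σ₁, (T x) {ξ ∈ Ω | u ξ = u x + ⟪p x, ξ - x⟫}ᶜ = 0 := by
  classical
  -- basic measurability facts
  have hTm : Measurable T := Measure.measurable_of_measurable_coe T hTmeas
  set κ : ProbabilityTheory.Kernel (EuclideanSpace ℝ (Fin n)) (EuclideanSpace ℝ (Fin n)) :=
    ⟨T, hTm⟩ with hκ
  haveI : ProbabilityTheory.IsMarkovKernel κ := ⟨fun x => hTprob x⟩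
  have hΩmeas : MeasurableSet Ω := hΩc.isClosed.measurableSet
  -- a.e. x is in Ω
  have haeΩ : ∀ᵐ x ∂σ₁, x ∈ Ω := by
    rw [MeasureTheory.ae_iff]
    exact hs1
  -- for x ∈ Ω, T x is a.e. supported on Ω
  have hTae : ∀ x ∈ Ω, ∀ᵐ ξ ∂(T x), ξ ∈ Ω := by
    intro x hx
    rw [MeasureTheory.ae_iff]
    exact hTsupp x hx
  -- bound on u over Ω
  obtain ⟨C, hC⟩ : ∃ C, ∀ ξ ∈ Ω, ‖u ξ‖ ≤ C := by
    rcases (hΩc.image (continuous_norm.comp hu)).bddAbove with ⟨C, hC⟩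
    exact ⟨C, fun ξ hξ => hC ⟨ξ, hξ, rfl⟩⟩
  -- bound on points of Ω
  obtain ⟨R, hR⟩ : ∃ R, ∀ ξ ∈ Ω, ‖ξ‖ ≤ R := by
    rcases hΩc.isBounded.subset_closedBall 0 with ⟨R, hRb⟩
    exact ⟨R, fun ξ hξ => by simpa using hRb hξ⟩
  -- integrability of u w.r.t. each T x, x ∈ Ω
  have hintu : ∀ x ∈ Ω, Integrable u (T x) := by
    intro x hx
    haveI := hTprob x
    refine ⟨hu.aestronglyMeasurable, ?_⟩
    exact MeasureTheory.HasFiniteIntegral.of_bounded ((hTae x hx).mono fun ξ hξ => hC ξ hξ)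
  -- integrability of the identity w.r.t. each T x, x ∈ Ω
  have hintid : ∀ x ∈ Ω, Integrable (fun ξ => ξ) (T x) := by
    intro x hx
    haveI := hTprob x
    refine ⟨continuous_id.aestronglyMeasurable, ?_⟩
    exact MeasureTheory.HasFiniteIntegral.of_bounded ((hTae x hx).mono fun ξ hξ => hR ξ hξ)
  -- integrability of the affine minorant w.r.t. each T x
  have hintaff : ∀ x ∈ Ω, Integrable (fun ξ => u x + ⟪p x, ξ - x⟫) (T x) := by
    intro x hx
    haveI := hTprob x
    have h1 : Integrable (fun ξ : EuclideanSpace ℝ (Fin n) => ξ - x) (T x) :=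
      (hintid x hx).sub (integrable_const x)
    have h2 : Integrable (fun ξ => ⟪p x, ξ - x⟫) (T x) :=
      ContinuousLinearMap.integrable_comp (innerSL ℝ (p x)) h1
    exact (integrable_const (u x)).add h2
  -- for x ∈ Ω with barycenter property, ∫ affine dT x = u x
  have haffint : ∀ x ∈ Ω, (∫ ξ, ξ ∂(T x)) = x → (∫ ξ, u x + ⟪p x, ξ - x⟫ ∂(T x)) = u x := by
    intro x hx hb
    haveI := hTprob x
    have h1 : Integrable (fun ξ : EuclideanSpace ℝ (Fin n) => ξ - x) (T x) :=
      (hintid x hx).sub (integrable_const x)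
    have h1' : Integrable (fun ξ => ⟪p x, ξ - x⟫) (T x) :=
      ContinuousLinearMap.integrable_comp (innerSL ℝ (p x)) h1
    rw [integral_add (integrable_const _) h1']
    have h2 : (∫ ξ, ⟪p x, ξ - x⟫ ∂(T x)) = ⟪p x, ∫ ξ, (ξ - x) ∂(T x)⟫ :=
      integral_inner h1 (p x)
    have h3 : (∫ ξ, (ξ - x) ∂(T x)) = 0 := by
      rw [integral_sub (hintid x hx) (integrable_const x), hb]
      simp
    rw [integral_const, h2, h3]
    simp
  -- for x ∈ Ω with barycenter property, u x ≤ ∫ u dT x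
  have hkey : ∀ x ∈ Ω, (∫ ξ, ξ ∂(T x)) = x → u x ≤ ∫ ξ, u ξ ∂(T x) := by
    intro x hx hb
    have := integral_mono_ae (hintaff x hx) (hintu x hx)
      ((hTae x hx).mono fun ξ hξ => hp x hx ξ hξ)
    rwa [haffint x hx hb] at this
  -- the function x ↦ ∫ u dT x is strongly measurable
  have hsm : StronglyMeasurable fun x => ∫ ξ, u ξ ∂(T x) := by
    have := MeasureTheory.StronglyMeasurable.integral_kernel_prod_right
      (κ := κ) (f := fun _ ξ => u ξ) (hu.stronglyMeasurable.comp_measurable measurable_snd)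
    exact this
  -- it is bounded a.e. and integrable w.r.t. σ₁
  have hbnd : ∀ x ∈ Ω, ‖∫ ξ, u ξ ∂(T x)‖ ≤ C := by
    intro x hx
    haveI := hTprob x
    calc ‖∫ ξ, u ξ ∂(T x)‖ ≤ C * ((T x) Set.univ).toReal :=
          norm_integral_le_of_norm_le_const ((hTae x hx).mono fun ξ hξ => hC ξ hξ)
      _ = C := by simp
  have hint1 : Integrable (fun x => ∫ ξ, u ξ ∂(T x)) σ₁ :=
    ⟨hsm.aestronglyMeasurable,
      MeasureTheory.HasFiniteIntegral.of_bounded (haeΩ.mono fun x hx => hbnd x hx)⟩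
  have hintu1 : Integrable u σ₁ :=
    ⟨hu.aestronglyMeasurable,
      MeasureTheory.HasFiniteIntegral.of_bounded (haeΩ.mono fun x hx => hC x hx)⟩
  -- disintegration of ∫ u dσ₂
  have hσ₂ : σ₂ = (σ₁.compProd κ).snd := by
    rw [hbind]
    ext s hs
    rw [Measure.snd_apply hs, Measure.compProd_apply (measurable_snd hs),
      Measure.bind_apply hs hTm.aemeasurable]
    rfl
  have haecp : ∀ᵐ z ∂(σ₁.compProd κ), z.2 ∈ Ω := by
    rw [MeasureTheory.ae_iff]
    have : {z : EuclideanSpace ℝ (Fin n) × EuclideanSpace ℝ (Fin n) | ¬ z.2 ∈ Ω}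
        = Prod.snd ⁻¹' Ωᶜ := rfl
    rw [this, Measure.compProd_apply (measurable_snd hΩmeas.compl)]
    refine lintegral_eq_zero_iff (κ.measurable_coe hΩmeas.compl) |>.2 ?_
    exact haeΩ.mono fun x hx => hTsupp x hx
  have hintcp : Integrable (fun z : EuclideanSpace ℝ (Fin n) × EuclideanSpace ℝ (Fin n) =>
      u z.2) (σ₁.compProd κ) := by
    refine ⟨(hu.comp continuous_snd).aestronglyMeasurable, ?_⟩
    exact MeasureTheory.HasFiniteIntegral.of_bounded (haecp.mono fun z hz => hC z.2 hz)
  have hstep : (∫ x, u x ∂σ₂) = ∫ x, ∫ ξ, u ξ ∂(T x) ∂σ₁ := by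
    rw [hσ₂]
    rw [Measure.snd, integral_map measurable_snd.aemeasurable hu.aestronglyMeasurable]
    exact Measure.integral_compProd hintcp
  -- the defect function φ
  set φ : EuclideanSpace ℝ (Fin n) → ℝ := fun x => (∫ ξ, u ξ ∂(T x)) - u x with hφ
  have hφint : Integrable φ σ₁ := hint1.sub hintu1
  have hφnn : 0 ≤ᵐ[σ₁] φ := by
    filter_upwards [haeΩ, hbary] with x hx hb
    simpa [hφ] using sub_nonneg.2 (hkey x hx hb)
  have hφzero : (∫ x, φ x ∂σ₁) = 0 := by
    rw [integral_sub hint1 hintu1, ← hstep, heq, sub_self]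
  have hφae : φ =ᵐ[σ₁] 0 :=
    (integral_eq_zero_iff_of_nonneg_ae hφnn hφint).1 hφzero
  -- conclusion
  filter_upwards [haeΩ, hbary, hφae] with x hx hb hz
  haveI := hTprob x
  -- the gap function g on the fiber
  set g : EuclideanSpace ℝ (Fin n) → ℝ := fun ξ => u ξ - (u x + ⟪p x, ξ - x⟫) with hg
  have hgint : Integrable g (T x) := (hintu x hx).sub (hintaff x hx)
  have hgnn : 0 ≤ᵐ[T x] g :=
    (hTae x hx).mono fun ξ hξ => sub_nonneg.2 (hp x hx ξ hξ)
  have hgzero : (∫ ξ, g ξ ∂(T x)) = 0 := by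
    rw [integral_sub (hintu x hx) (hintaff x hx), haffint x hx hb]
    have : (∫ ξ, u ξ ∂(T x)) = u x := by
      have := hz
      simp only [hφ, Pi.zero_apply] at this
      linarith [this]
    rw [this, sub_self]
  have hgae : g =ᵐ[T x] 0 :=
    (integral_eq_zero_iff_of_nonneg_ae hgnn hgint).1 hgzero
  have hgne : (T x) {ξ | g ξ ≠ 0} = 0 := by
    have := hgae
    rw [Filter.EventuallyEq, MeasureTheory.ae_iff] at this
    simpa using this
  refine measure_mono_null ?_ (measure_union_null (hTsupp x hx) hgne)
  intro ξ hξ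
  simp only [Set.mem_compl_iff, Set.mem_setOf_eq, not_and] at hξ
  by_cases hξΩ : ξ ∈ Ω
  · exact Or.inr (fun h0 => hξ hξΩ (by simpa [hg, sub_eq_zero] using h0))
  · exact Or.inl hξΩ
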